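/- Fix i ∈ ℤ. Every partition λ has at most one addable box of residue i and at most one removable box of residue i, and never both an addable and a removable box of residue i. Moreover, (number of addable boxes of residue i of λ) − (number of removable boxes of residue i of λ) = δ_{i,0} − 2 v_i(λ) + v_{i−1}(λ) + v_{i+1}(λ). -/

import Mathlib

/-- A partition: a non-increasing, eventually-zero sequence of non-negative integers.
`part k` is the `(k+1)`-st part `λ_{k+1}`. -/
structure PartitionSeq : Type where
  part : ℕ → ℕ
  mono : ∀ k, part (k + 1) ≤ part k
  ev_zero : ∃ N : ℕ, ∀ k, N ≤ k → part k = 0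

namespace PartitionSeq

/-- The Young diagram of a partition: the box `b = (j, k)` in column `j ≥ 0` and row
`k ≥ 0` belongs to the diagram iff `j < λ_{k+1}`. -/
def diagram (lam : PartitionSeq) : Set (ℕ × ℕ) := {b | b.1 < lam.part b.2}

/-- The size `|λ| = Σ_i λ_i` of a partition. -/
noncomputable def size (lam : PartitionSeq) : ℕ := ∑ᶠ k : ℕ, lam.part k

end PartitionSeq

/-- The residue `j - k` of the box `b = (j, k)`. -/
def boxResidue (b : ℕ × ℕ) : ℤ := (b.1 : ℤ) - (b.2 : ℤ)

/-- `v_i(λ)`: the number of boxes of the Young diagram of `λ` of residue `i`. -/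
noncomputable def boxCount (lam : PartitionSeq) (i : ℤ) : ℕ :=
  {b ∈ lam.diagram | boxResidue b = i}.ncard

/-- A box `b ∉ D_λ` is addable if adding it yields the Young diagram of a partition. -/
def AddableBox (lam : PartitionSeq) (b : ℕ × ℕ) : Prop :=
  b ∉ lam.diagram ∧ ∃ mu : PartitionSeq, mu.diagram = lam.diagram ∪ {b}

/-- A box `b ∈ D_λ` is removable if deleting it yields the Young diagram of a
partition. -/
def RemovableBox (lam : PartitionSeq) (b : ℕ × ℕ) : Prop :=
  b ∈ lam.diagram ∧ ∃ mu : PartitionSeq, mu.diagram = lam.diagram \ {b}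

namespace AddRem

variable (lam : PartitionSeq)

/-- the diagonal function `f k = λ_{k+1} - k`. -/
def f (k : ℕ) : ℤ := (lam.part k : ℤ) - k

lemma f_succ_lt (k : ℕ) : f lam (k + 1) < f lam k := by
  have := lam.mono k
  simp only [f]
  push_cast
  omega

lemma f_strictAnti : StrictAnti (f lam) :=
  strictAnti_nat_of_succ_lt (f_succ_lt lam)

lemma exists_f_le (i : ℤ) : ∃ k, f lam k ≤ i := by
  obtain ⟨N, hN⟩ := lam.ev_zero
  refine ⟨max N (-i).toNat, ?_⟩
  have h0 : lam.part (max N (-i).toNat) = 0 := hN _ (le_max_left _ _)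
  have h1 : (-i).toNat ≤ max N (-i).toNat := le_max_right _ _
  have h2 : -i ≤ ((max N (-i).toNat : ℕ) : ℤ) := le_trans (Int.self_le_toNat _) (by exact_mod_cast h1)
  simp [f, h0]
  omega

noncomputable def m (i : ℤ) : ℕ := Nat.find (exists_f_le lam i)

lemma m_le_iff (i : ℤ) (k : ℕ) : m lam i ≤ k ↔ f lam k ≤ i := by
  constructor
  · intro h
    exact le_trans ((f_strictAnti lam).antitone h) (Nat.find_spec (exists_f_le lam i))
  · intro h
    exact Nat.find_le h

lemma lt_m_iff (i : ℤ) (k : ℕ) : k < m lam i ↔ i < f lam k := by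
  rw [← not_le, ← not_le, m_le_iff]

end AddRem

namespace AddRem
variable (lam : PartitionSeq)

lemma addable_iff (j k : ℕ) :
    AddableBox lam (j, k) ↔
      j = lam.part k ∧ (k = 0 ∨ lam.part k < lam.part (k - 1)) := by
  constructor
  · rintro ⟨hnot, mu, hmu⟩
    have hnot' : ¬ j < lam.part k := hnot
    have key : ∀ a b : ℕ, a < mu.part b ↔ (a = j ∧ b = k ∨ a < lam.part b) := by
      intro a b
      have := Set.ext_iff.mp hmu (a, b)
      simpa [PartitionSeq.diagram, Prod.ext_iff] using this
    have hk1 := key j k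
    have hk2 := key (lam.part k) k
    have hk3 := key (lam.part k + 1) k
    have hj : j = lam.part k := by omega
    have hmupk : mu.part k = lam.part k + 1 := by omega
    refine ⟨hj, ?_⟩
    rcases Nat.eq_zero_or_pos k with h0 | hpos
    · exact Or.inl h0
    · right
      have hb : mu.part (k - 1) = lam.part (k - 1) := by
        have h1 := key (lam.part (k - 1)) (k - 1)
        have h2 := key (mu.part (k - 1)) (k - 1)
        omega
      have := mu.mono (k - 1)
      have hkk : k - 1 + 1 = k := by omega
      rw [hkk, hb, hmupk] at this
      omega
  · rintro ⟨hj, hcond⟩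
    have hstep : ∀ r, r + 1 = k → lam.part k + 1 ≤ lam.part r := by
      intro r hr
      rcases hcond with h0 | hlt
      · omega
      · have hkr : k - 1 = r := by omega
        rw [hkr] at hlt; omega
    have hmono : ∀ r, (if r + 1 = k then lam.part k + 1 else lam.part (r + 1)) ≤
        (if r = k then lam.part k + 1 else lam.part r) := by
      intro r
      rcases eq_or_ne r k with rfl | hrk
      · rw [if_neg (by omega), if_pos rfl]
        have := lam.mono r; omega
      · rw [if_neg hrk]
        rcases eq_or_ne (r + 1) k with hk | hk
        · rw [if_pos hk]; exact hstep r hk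
        · rw [if_neg hk]; exact lam.mono r
    obtain ⟨N, hN⟩ := lam.ev_zero
    refine ⟨by simp [PartitionSeq.diagram, hj],
      ⟨⟨fun r => if r = k then lam.part k + 1 else lam.part r, hmono, ?_⟩, ?_⟩⟩
    · refine ⟨max N (k + 1), fun r hr => ?_⟩
      have h1 : r ≠ k := by omega
      simp only [if_neg h1]
      exact hN r (by omega)
    · ext ⟨a, b⟩
      simp only [PartitionSeq.diagram, Set.mem_union, Set.mem_setOf_eq, Set.mem_singleton_iff,
        Prod.ext_iff]
      by_cases hb : b = k <;> simp [hb, hj] <;> omega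

lemma removable_iff (j k : ℕ) :
    RemovableBox lam (j, k) ↔
      j + 1 = lam.part k ∧ lam.part (k + 1) < lam.part k := by
  constructor
  · rintro ⟨hin, mu, hmu⟩
    have hin' : j < lam.part k := hin
    have key : ∀ a b : ℕ, a < mu.part b ↔ (a < lam.part b ∧ ¬(a = j ∧ b = k)) := by
      intro a b
      have := Set.ext_iff.mp hmu (a, b)
      simpa [PartitionSeq.diagram, Prod.ext_iff] using this
    have hk1 := key j k
    have hk2 := key (lam.part k - 1) k
    have hk3 := key (j - 1) k
    have hj : j + 1 = lam.part k := by omega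
    have hmupk : mu.part k = j := by omega
    have hb : mu.part (k + 1) = lam.part (k + 1) := by
      have h1 := key (lam.part (k + 1)) (k + 1)
      have h2 := key (mu.part (k + 1)) (k + 1)
      omega
    have := mu.mono k
    rw [hb, hmupk] at this
    exact ⟨hj, by omega⟩
  · rintro ⟨hj, hlt⟩
    have hmono : ∀ r, (if r + 1 = k then lam.part k - 1 else lam.part (r + 1)) ≤
        (if r = k then lam.part k - 1 else lam.part r) := by
      intro r
      rcases eq_or_ne r k with rfl | hrk
      · rw [if_neg (by omega), if_pos rfl]
        omega
      · rw [if_neg hrk]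
        rcases eq_or_ne (r + 1) k with hk | hk
        · rw [if_pos hk]
          have := lam.mono r
          rw [hk] at this
          omega
        · rw [if_neg hk]; exact lam.mono r
    obtain ⟨N, hN⟩ := lam.ev_zero
    refine ⟨by simp [PartitionSeq.diagram]; omega,
      ⟨⟨fun r => if r = k then lam.part k - 1 else lam.part r, hmono, ?_⟩, ?_⟩⟩
    · refine ⟨max N (k + 1), fun r hr => ?_⟩
      have h1 : r ≠ k := by omega
      simp only [if_neg h1]
      exact hN r (by omega)
    · ext ⟨a, b⟩
      simp only [PartitionSeq.diagram, Set.mem_diff, Set.mem_setOf_eq, Set.mem_singleton_iff,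
        Prod.ext_iff]
      by_cases hb : b = k <;> simp [hb] <;> omega

end AddRem

namespace AddRem
variable (lam : PartitionSeq)

lemma toNat_le_m (i : ℤ) : (-i).toNat ≤ m lam i := by
  by_contra h
  push_neg at h
  have h2 : f lam (m lam i) ≤ i := (m_le_iff lam i _).mp le_rfl
  simp only [f] at h2
  omega

lemma boxCount_eq (i : ℤ) : boxCount lam i = m lam i - (-i).toNat := by
  have hset : {b ∈ lam.diagram | boxResidue b = i} =
      (fun k : ℕ => (((k : ℤ) + i).toNat, k)) '' Set.Ico ((-i).toNat) (m lam i) := by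
    ext ⟨j, k⟩
    simp only [Set.mem_setOf_eq, Set.mem_image, Set.mem_Ico, PartitionSeq.diagram, boxResidue,
      Prod.ext_iff]
    constructor
    · rintro ⟨hjk, hres⟩
      refine ⟨k, ⟨by omega, ?_⟩, by omega, rfl⟩
      rw [lt_m_iff]
      simp only [f]
      omega
    · rintro ⟨k', ⟨h1, h2⟩, h3, rfl⟩
      rw [lt_m_iff] at h2
      simp only [f] at h2
      omega
  rw [boxCount, hset, Set.ncard_image_of_injOn (fun a _ b _ hab => (Prod.ext_iff.mp hab).2),
    ← Finset.coe_Ico, Set.ncard_coe_finset, Nat.card_Ico]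

lemma boxCount_cast (i : ℤ) : (boxCount lam i : ℤ) = m lam i - max (-i) 0 := by
  rw [boxCount_eq, Nat.cast_sub (toNat_le_m lam i), Int.toNat_eq_max]

lemma m_eq_of_f_eq {i : ℤ} {a : ℕ} (ha : f lam a = i) : m lam i = a := by
  have h1 : m lam i ≤ a := (m_le_iff lam i a).mpr ha.le
  rcases lt_or_eq_of_le h1 with h | h
  · exfalso
    have h3 := f_strictAnti lam h
    have h2 : f lam (m lam i) ≤ i := (m_le_iff lam i _).mp le_rfl
    omega
  · exact h

lemma m_pred_of {i : ℤ} (h : ∃ k, f lam k = i) : m lam (i - 1) = m lam i + 1 := by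
    obtain ⟨a, ha⟩ := h
    have hma : m lam i = a := m_eq_of_f_eq lam ha
    have h1 : m lam (i - 1) ≤ a + 1 := by
      rw [m_le_iff]
      have := f_succ_lt lam a
      omega
    have h2 : a < m lam (i - 1) := by
      rw [lt_m_iff]
      omega
    omega

lemma m_pred_of_not {i : ℤ} (h : ∀ k, f lam k ≠ i) : m lam (i - 1) = m lam i := by
    have h1 : m lam i ≤ m lam (i - 1) := by
      rw [m_le_iff]
      have := (m_le_iff lam (i - 1) _).mp le_rfl
      omega
    have h2 : m lam (i - 1) ≤ m lam i := by
      rw [m_le_iff]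
      have h3 := (m_le_iff lam i _).mp le_rfl
      have h4 := h (m lam i)
      omega
    exact le_antisymm h2 h1

end AddRem

namespace AddRem
variable (lam : PartitionSeq)

lemma mem_setA (i : ℤ) (j k : ℕ) :
    (j, k) ∈ {b : ℕ × ℕ | AddableBox lam b ∧ boxResidue b = i} ↔
      f lam k = i ∧ (k = 0 ∨ lam.part k < lam.part (k - 1)) ∧ j = lam.part k := by
  simp only [Set.mem_setOf_eq, addable_iff, boxResidue, f]
  constructor
  · rintro ⟨⟨hj, hc⟩, hr⟩
    exact ⟨by omega, hc, hj⟩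
  · rintro ⟨hf, hc, hj⟩
    exact ⟨⟨hj, hc⟩, by omega⟩

lemma mem_setR (i : ℤ) (j k : ℕ) :
    (j, k) ∈ {b : ℕ × ℕ | RemovableBox lam b ∧ boxResidue b = i} ↔
      f lam k = i + 1 ∧ lam.part (k + 1) < lam.part k ∧ j + 1 = lam.part k := by
  simp only [Set.mem_setOf_eq, removable_iff, boxResidue, f]
  constructor
  · rintro ⟨⟨hj, hc⟩, hr⟩
    exact ⟨by omega, hc, hj⟩
  · rintro ⟨hf, hc, hj⟩
    exact ⟨⟨hj, hc⟩, by omega⟩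

lemma setA_subsingleton (i : ℤ) :
    {b : ℕ × ℕ | AddableBox lam b ∧ boxResidue b = i}.Subsingleton := by
  rintro ⟨j1, k1⟩ h1 ⟨j2, k2⟩ h2
  rw [mem_setA] at h1 h2
  obtain ⟨hf1, -, hj1⟩ := h1
  obtain ⟨hf2, -, hj2⟩ := h2
  have hk : k1 = k2 := (f_strictAnti lam).injective (hf1.trans hf2.symm)
  subst hk
  simp [Prod.ext_iff, hj1, hj2]

lemma setR_subsingleton (i : ℤ) :
    {b : ℕ × ℕ | RemovableBox lam b ∧ boxResidue b = i}.Subsingleton := by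
  rintro ⟨j1, k1⟩ h1 ⟨j2, k2⟩ h2
  rw [mem_setR] at h1 h2
  obtain ⟨hf1, -, hj1⟩ := h1
  obtain ⟨hf2, -, hj2⟩ := h2
  have hk : k1 = k2 := (f_strictAnti lam).injective (hf1.trans hf2.symm)
  subst hk
  have : j1 = j2 := by omega
  rw [this]

lemma ncard_setA_of {i : ℤ}
    (h : ∃ k, f lam k = i ∧ (k = 0 ∨ lam.part k < lam.part (k - 1))) :
    {b : ℕ × ℕ | AddableBox lam b ∧ boxResidue b = i}.ncard = 1 := by
  obtain ⟨k, hf, hc⟩ := h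
  have hset : {b : ℕ × ℕ | AddableBox lam b ∧ boxResidue b = i} = {(lam.part k, k)} := by
    ext ⟨j', k'⟩
    rw [mem_setA, Set.mem_singleton_iff, Prod.mk.injEq]
    constructor
    · rintro ⟨hf', hc', hj'⟩
      have hk : k' = k := (f_strictAnti lam).injective (hf'.trans hf.symm)
      subst hk
      exact ⟨hj', rfl⟩
    · rintro ⟨h1, rfl⟩
      exact ⟨hf, hc, h1⟩
  rw [hset, Set.ncard_singleton]

lemma ncard_setA_of_not {i : ℤ}
    (h : ¬ ∃ k, f lam k = i ∧ (k = 0 ∨ lam.part k < lam.part (k - 1))) :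
    {b : ℕ × ℕ | AddableBox lam b ∧ boxResidue b = i}.ncard = 0 := by
  convert Set.ncard_empty (ℕ × ℕ)
  rw [Set.eq_empty_iff_forall_notMem]
  rintro ⟨j, k⟩ hm
  rw [mem_setA] at hm
  exact h ⟨k, hm.1, hm.2.1⟩

lemma ncard_setR_of {i : ℤ}
    (h : ∃ k, f lam k = i + 1 ∧ lam.part (k + 1) < lam.part k) :
    {b : ℕ × ℕ | RemovableBox lam b ∧ boxResidue b = i}.ncard = 1 := by
  obtain ⟨k, hf, hc⟩ := h
  have hset : {b : ℕ × ℕ | RemovableBox lam b ∧ boxResidue b = i} = {(lam.part k - 1, k)} := by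
    ext ⟨j', k'⟩
    rw [mem_setR, Set.mem_singleton_iff, Prod.mk.injEq]
    constructor
    · rintro ⟨hf', hc', hj'⟩
      have hk : k' = k := (f_strictAnti lam).injective (hf'.trans hf.symm)
      subst hk
      exact ⟨by omega, rfl⟩
    · rintro ⟨h1, rfl⟩
      exact ⟨hf, hc, by omega⟩
  rw [hset, Set.ncard_singleton]

lemma ncard_setR_of_not {i : ℤ}
    (h : ¬ ∃ k, f lam k = i + 1 ∧ lam.part (k + 1) < lam.part k) :
    {b : ℕ × ℕ | RemovableBox lam b ∧ boxResidue b = i}.ncard = 0 := by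
  convert Set.ncard_empty (ℕ × ℕ)
  rw [Set.eq_empty_iff_forall_notMem]
  rintro ⟨j, k⟩ hm
  rw [mem_setR] at hm
  exact h ⟨k, hm.1, hm.2.1⟩

end AddRem


open AddRem in
/-- every partition has at most one addable and at most one removable box
of residue `i`, never both; and `#{addable of residue i} − #{removable of residue i}
= δ_{i,0} − 2v_i(λ) + v_{i−1}(λ) + v_{i+1}(λ)`. -/
theorem addable_removable (lam : PartitionSeq) (i : ℤ) :
    {b : ℕ × ℕ | AddableBox lam b ∧ boxResidue b = i}.Subsingleton ∧
    {b : ℕ × ℕ | RemovableBox lam b ∧ boxResidue b = i}.Subsingleton ∧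
    ¬((∃ b, AddableBox lam b ∧ boxResidue b = i) ∧
      (∃ b, RemovableBox lam b ∧ boxResidue b = i)) ∧
    ({b : ℕ × ℕ | AddableBox lam b ∧ boxResidue b = i}.ncard : ℤ) -
      ({b : ℕ × ℕ | RemovableBox lam b ∧ boxResidue b = i}.ncard : ℤ)
      = (if i = 0 then 1 else 0) - 2 * (boxCount lam i : ℤ)
          + (boxCount lam (i - 1) : ℤ) + (boxCount lam (i + 1) : ℤ) := by
  refine ⟨setA_subsingleton lam i, setR_subsingleton lam i, ?_, ?_⟩
  · rintro ⟨⟨⟨ja, ka⟩, ha⟩, ⟨⟨jr, kr⟩, hr⟩⟩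
    obtain ⟨hfa, hca, hja⟩ := (mem_setA lam i ja ka).mp ha
    obtain ⟨hfr, hcr, hjr⟩ := (mem_setR lam i jr kr).mp hr
    have hlt : kr < ka := (f_strictAnti lam).lt_iff_gt.mp (by omega)
    have hstep : f lam (kr + 1) < f lam kr := f_succ_lt lam kr
    have hmono : f lam ka ≤ f lam (kr + 1) := (f_strictAnti lam).antitone (by omega)
    have hk : kr + 1 = ka := (f_strictAnti lam).injective (by omega : f lam (kr + 1) = f lam ka)
    rcases hca with h0 | hlt2
    · omega
    · subst hk
      rw [Nat.add_sub_cancel] at hlt2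
      simp only [f] at hfa hfr
      omega
  · by_cases h1 : ∃ k, f lam k = i
    · obtain ⟨a, ha⟩ := h1
      by_cases hc : a = 0 ∨ lam.part a < lam.part (a - 1)
      · have h2 : ∀ b, f lam b ≠ i + 1 := by
          intro b hb
          have hba : b < a := (f_strictAnti lam).lt_iff_gt.mp (by omega)
          rcases hc with h0 | hlt
          · omega
          · have h3 : f lam (a - 1) ≤ f lam b := (f_strictAnti lam).antitone (by omega)
            have h4 : f lam a < f lam (a - 1) := by
              have h5 := f_succ_lt lam (a - 1)
              rw [show a - 1 + 1 = a by omega] at h5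
              exact h5
            have h6 : a - 1 = b := (f_strictAnti lam).injective (by omega)
            have h7 : f lam (a - 1) = i + 1 := by omega
            simp only [f] at h7 ha
            omega
        have hA := ncard_setA_of lam ⟨a, ha, hc⟩
        have hR := ncard_setR_of_not lam (by rintro ⟨b, hb, -⟩; exact h2 b hb)
        have hm1 : m lam (i - 1) = m lam i + 1 := m_pred_of lam ⟨a, ha⟩
        have hm2 : m lam i = m lam (i + 1) := by
          have h3 := m_pred_of_not lam h2
          rw [show i + 1 - 1 = i by ring] at h3
          omega
        rw [hA, hR, boxCount_cast, boxCount_cast, boxCount_cast, hm1, hm2]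
        split_ifs <;> push_cast <;> omega
      · push_neg at hc
        obtain ⟨ha0, hge⟩ := hc
        have hmle : lam.part a ≤ lam.part (a - 1) := by
          have h3 := lam.mono (a - 1)
          rw [show a - 1 + 1 = a by omega] at h3
          exact h3
        have hfa1 : f lam (a - 1) = i + 1 := by
          simp only [f] at ha ⊢
          omega
        have hA := ncard_setA_of_not lam (by
          rintro ⟨b, hb, hcb⟩
          have hba : b = a := (f_strictAnti lam).injective (hb.trans ha.symm)
          subst hba
          exact (by omega : ¬(b = 0 ∨ lam.part b < lam.part (b - 1))) hcb)
        have hR := ncard_setR_of_not lam (by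
          rintro ⟨b, hb, hcb⟩
          have hba : b = a - 1 := (f_strictAnti lam).injective (hb.trans hfa1.symm)
          subst hba
          rw [show a - 1 + 1 = a by omega] at hcb
          omega)
        have hm1 : m lam (i - 1) = m lam i + 1 := m_pred_of lam ⟨a, ha⟩
        have hm2 : m lam i = m lam (i + 1) + 1 := by
          have h3 := m_pred_of lam ⟨a - 1, hfa1⟩
          rw [show i + 1 - 1 = i by ring] at h3
          omega
        rw [hA, hR, boxCount_cast, boxCount_cast, boxCount_cast, hm1, hm2]
        split_ifs <;> push_cast <;> omega
    · push_neg at h1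
      have hA := ncard_setA_of_not lam (by rintro ⟨b, hb, -⟩; exact h1 b hb)
      have hm1 : m lam (i - 1) = m lam i := m_pred_of_not lam h1
      by_cases h2 : ∃ k, f lam k = i + 1
      · obtain ⟨b, hb⟩ := h2
        have hrc : lam.part (b + 1) < lam.part b := by
          have hs := f_succ_lt lam b
          have hne := h1 (b + 1)
          simp only [f] at hs hb hne
          omega
        have hR := ncard_setR_of lam ⟨b, hb, hrc⟩
        have hm2 : m lam i = m lam (i + 1) + 1 := by
          have h3 := m_pred_of lam ⟨b, hb⟩
          rw [show i + 1 - 1 = i by ring] at h3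
          omega
        rw [hA, hR, boxCount_cast, boxCount_cast, boxCount_cast, hm1, hm2]
        split_ifs <;> push_cast <;> omega
      · push_neg at h2
        have hR := ncard_setR_of_not lam (by rintro ⟨b, hb, -⟩; exact h2 b hb)
        have hm2 : m lam i = m lam (i + 1) := by
          have h3 := m_pred_of_not lam h2
          rw [show i + 1 - 1 = i by ring] at h3
          omega
        rw [hA, hR, boxCount_cast, boxCount_cast, boxCount_cast, hm1, hm2]
        split_ifs <;> push_cast <;> omega
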